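/- Let f : ℂ → ℂ be continuous on an open set U ⊆ ℂ and complex differentiable at every point of U \ X, where X ⊆ U is a compact countable set with exactly one accumulation point w, and w ∈ X. If △(z₁, z₂, z₃) is a triangle contained in U and w lies in the interior of △(z₁, z₂, z₃), then the integral of f along the closed polygonal path [z₁, z₂, z₃, z₁] equals 0. -/

import Mathlib

open Set

/-- The complex line integral of `f` along the segment from `a` to `b`:
`∫_{t ∈ [0,1]} f((1-t)·a + t·b) · (b - a) dt`. -/
noncomputable def segmentIntegral (f : ℂ → ℂ) (a b : ℂ) : ℂ :=
  ∫ t in (0:ℝ)..1, f ((1 - t) • a + t • b) * (b - a)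

/-- The integral of `f` along the closed polygonal path `[z₁, z₂, z₃, z₁]`. -/
noncomputable def triangleIntegral (f : ℂ → ℂ) (z₁ z₂ z₃ : ℂ) : ℂ :=
  segmentIntegral f z₁ z₂ + segmentIntegral f z₂ z₃ + segmentIntegral f z₃ z₁

/-- `w` is an accumulation point of `X`: every neighborhood of `w` contains a
point of `X` other than `w`. -/
def IsAccumulationPoint (w : ℂ) (X : Set ℂ) : Prop :=
  ∀ V ∈ nhds w, ∃ x, x ∈ V ∩ X ∧ x ≠ w

open intervalIntegral in
section
open intervalIntegral

lemma seg_path (a b : ℂ) (t : ℝ) : (1 - t) • a + t • b = a + t • (b - a) := by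
  simp [sub_smul, smul_sub]; ring

/-- FTC along a segment. -/
lemma seg_ftc {f F : ℂ → ℂ} {a b : ℂ}
    (hcont : ContinuousOn f (segment ℝ a b))
    (hF : ∀ z ∈ segment ℝ a b, HasDerivAt F (f z) z) :
    segmentIntegral f a b = F b - F a := by
  have hmem : ∀ t : ℝ, t ∈ Icc (0:ℝ) 1 → (1 - t) • a + t • b ∈ segment ℝ a b := by
    intro t ht
    exact ⟨1 - t, t, by linarith [ht.1, ht.2], ht.1, by ring, rfl⟩
  have hγ : ∀ t : ℝ, HasDerivAt (fun s : ℝ => (1 - s) • a + s • b) (b - a) t := by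
    intro t
    simp only [seg_path]
    simpa using ((hasDerivAt_id t).smul_const (b - a)).const_add a
  have key : ∀ t ∈ uIcc (0:ℝ) 1,
      HasDerivAt (fun s : ℝ => F ((1 - s) • a + s • b)) (f ((1 - t) • a + t • b) * (b - a)) t := by
    intro t ht
    rw [uIcc_of_le (by norm_num : (0:ℝ) ≤ 1)] at ht
    have := (hF _ (hmem t ht)).scomp t (hγ t)
    simpa [smul_eq_mul, mul_comm, Function.comp_def] using this
  have hcont' : ContinuousOn (fun t : ℝ => f ((1 - t) • a + t • b) * (b - a)) (uIcc (0:ℝ) 1) := by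
    rw [uIcc_of_le (by norm_num : (0:ℝ) ≤ 1)]
    apply ContinuousOn.mul _ continuousOn_const
    apply hcont.comp
    · exact (Continuous.continuousOn (by continuity))
    · exact hmem
  have := intervalIntegral.integral_eq_sub_of_hasDerivAt key (hcont'.intervalIntegrable)
  simpa [segmentIntegral] using this

lemma seg_rev (f : ℂ → ℂ) (a b : ℂ) : segmentIntegral f a b = - segmentIntegral f b a := by
  unfold segmentIntegral
  have : (∫ t in (0:ℝ)..1, f ((1 - t) • b + t • a) * (a - b))
      = ∫ t in (0:ℝ)..1, f ((1 - (1 - t)) • b + (1 - t) • a) * (a - b) := by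
    rw [intervalIntegral.integral_comp_sub_left (fun t => f ((1 - t) • b + t • a) * (a - b)) 1]
    norm_num
  rw [this]
  rw [← intervalIntegral.integral_neg]
  congr 1
  ext t
  have h1 : (1 - (1 - t)) • b + (1 - t) • a = (1 - t) • a + t • b := by
    simp; ring_nf
  rw [h1]; ring

lemma seg_split {f : ℂ → ℂ} {a b : ℂ} (hcont : ContinuousOn f (segment ℝ a b)) :
    segmentIntegral f a b =
      segmentIntegral f a ((a + b) / 2) + segmentIntegral f ((a + b) / 2) b := by
  set m : ℂ := (a + b) / 2 with hm
  set g : ℝ → ℂ := fun t => f ((1 - t) • a + t • b) * (b - a) with hg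
  have hmem : ∀ t : ℝ, t ∈ Icc (0:ℝ) 1 → (1 - t) • a + t • b ∈ segment ℝ a b := by
    intro t ht
    exact ⟨1 - t, t, by linarith [ht.1, ht.2], ht.1, by ring, rfl⟩
  have hgc : ContinuousOn g (Icc (0:ℝ) 1) := by
    apply ContinuousOn.mul _ continuousOn_const
    apply hcont.comp
    · exact (Continuous.continuousOn (by continuity))
    · exact hmem
  have hint1 : IntervalIntegrable g MeasureTheory.volume 0 (1/2) :=
    (hgc.mono (by rw [uIcc_of_le]; exact Icc_subset_Icc (le_refl _) (by norm_num); norm_num)).intervalIntegrable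
  have hint2 : IntervalIntegrable g MeasureTheory.volume (1/2) 1 :=
    (hgc.mono (by rw [uIcc_of_le]; exact Icc_subset_Icc (by norm_num) (le_refl _); norm_num)).intervalIntegrable
  have hadd : (∫ t in (0:ℝ)..1, g t)
      = (∫ t in (0:ℝ)..(1/2), g t) + ∫ t in (1/2:ℝ)..1, g t :=
    (intervalIntegral.integral_add_adjacent_intervals hint1 hint2).symm
  have e1 : segmentIntegral f a m = ∫ t in (0:ℝ)..(1/2), g t := by
    unfold segmentIntegral
    have comp : ∀ s : ℝ, f ((1 - s) • a + s • m) * (m - a) = (2:ℝ)⁻¹ • g (s / 2) := by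
      intro s
      have h1 : (1 - s) • a + s • m = (1 - s / 2) • a + (s / 2) • b := by
        rw [hm]
        push_cast [Complex.real_smul]
        ring
      have h2 : m - a = (b - a) / 2 := by rw [hm]; ring
      rw [h1, h2, hg]
      simp [Complex.real_smul]
      ring
    simp_rw [comp]
    rw [intervalIntegral.integral_smul, intervalIntegral.integral_comp_div (a := (0:ℝ)) (b := 1) (c := 2) g (by norm_num)]
    norm_num [smul_smul]; ring
  have e2 : segmentIntegral f m b = ∫ t in (1/2:ℝ)..1, g t := by
    unfold segmentIntegral
    have comp : ∀ s : ℝ, f ((1 - s) • m + s • b) * (b - m) = (2:ℝ)⁻¹ • g ((s + 1) / 2) := by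
      intro s
      have h1 : (1 - s) • m + s • b = (1 - (s + 1) / 2) • a + ((s + 1) / 2) • b := by
        rw [hm]
        push_cast [Complex.real_smul]
        ring
      have h2 : b - m = (b - a) / 2 := by rw [hm]; ring
      rw [h1, h2, hg]
      simp [Complex.real_smul]
      ring
    simp_rw [comp]
    rw [intervalIntegral.integral_smul]
    rw [show (fun s : ℝ => g ((s + 1) / 2)) = fun s : ℝ => (fun x => g (x / 2)) (s + 1) from rfl]
    rw [intervalIntegral.integral_comp_add_right (fun x => g (x / 2)) 1]
    rw [intervalIntegral.integral_comp_div (a := (0:ℝ)+1) (b := 1+1) (c := 2) g (by norm_num)]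
    norm_num [smul_smul]; ring
  rw [e1, e2, ← hadd]
  rfl

/-- A function with a power series on a ball has a primitive on that ball. -/
lemma exists_primitive_on_ball {f : ℂ → ℂ} {c : ℂ} {R : NNReal}
    {p : FormalMultilinearSeries ℂ ℂ ℂ} (hp : HasFPowerSeriesOnBall f p c R) :
    ∃ F : ℂ → ℂ, ∀ z ∈ Metric.ball c (R : ℝ), HasDerivAt F (f z) z := by
  refine ⟨fun z => ∑' n : ℕ, (↑(n + 1) : ℂ)⁻¹ * p.coeff n * (z - c) ^ (n + 1), ?_⟩
  intro z hz
  rw [Metric.mem_ball] at hz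
  obtain ⟨r', hzr', hr'R⟩ := exists_between hz
  have hr'0 : 0 ≤ r' := le_trans dist_nonneg hzr'.le
  lift r' to NNReal using hr'0
  have hsum : Summable fun n : ℕ => ‖p n‖ * (r' : ℝ) ^ n :=
    p.summable_norm_mul_pow (lt_of_lt_of_le (by exact_mod_cast hr'R) hp.r_le)
  have key := hasDerivAt_tsum_of_isPreconnected (u := fun n => ‖p n‖ * (r' : ℝ) ^ n)
    (g := fun n z => (↑(n + 1) : ℂ)⁻¹ * p.coeff n * (z - c) ^ (n + 1))
    (g' := fun n z => p.coeff n * (z - c) ^ n)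
    hsum (Metric.isOpen_ball (x := c) (ε := (r' : ℝ)))
    ((convex_ball c (r' : ℝ)).isPreconnected)
    (fun n y _ => ?_) (fun n y hy => ?_) (Metric.mem_ball_self (lt_of_le_of_lt dist_nonneg hzr'))
    ?_ (Metric.mem_ball.2 hzr')
  · have hval : ∑' n : ℕ, p.coeff n * (z - c) ^ n = f z := by
      have hmem : z - c ∈ Metric.eball (0 : ℂ) R := by
        rw [Metric.mem_eball, edist_zero_right]
        have : ‖z - c‖ < (R : ℝ) := by rw [← dist_eq_norm]; exact hz
        exact_mod_cast this
      have := (hp.hasSum hmem).tsum_eq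
      simp only [FormalMultilinearSeries.apply_eq_pow_smul_coeff, smul_eq_mul] at this
      rw [add_sub_cancel] at this
      rw [← this]
      congr 1; ext n; ring
    rwa [hval] at key
  · -- HasDerivAt of each term
    have h1 : HasDerivAt (fun w : ℂ => (w - c) ^ (n + 1)) (((n:ℂ) + 1) * (y - c) ^ n) y := by
      simpa using ((hasDerivAt_id y).sub_const c).fun_pow (n + 1)
    have := h1.const_mul ((↑(n + 1) : ℂ)⁻¹ * p.coeff n)
    convert this using 1
    · rfl
    have hne : ((n : ℂ) + 1) ≠ 0 := Nat.cast_add_one_ne_zero n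
    push_cast
    field_simp
  · -- bound
    simp only [FormalMultilinearSeries.norm_apply_eq_norm_coef]
    rw [norm_mul, norm_pow]
    gcongr
    rw [← dist_eq_norm]
    exact (Metric.mem_ball.1 hy).le
  · -- summable at center
    apply Summable.of_norm
    have : ∀ n : ℕ, ‖(↑(n + 1) : ℂ)⁻¹ * p.coeff n * (c - c) ^ (n + 1)‖ = 0 := by
      intro n; simp
    simp_rw [this]
    exact summable_zero

lemma tri_subdiv {f : ℂ → ℂ} {a b c : ℂ}
    (h1 : ContinuousOn f (segment ℝ a b)) (h2 : ContinuousOn f (segment ℝ b c))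
    (h3 : ContinuousOn f (segment ℝ c a)) :
    triangleIntegral f a b c =
      triangleIntegral f a ((a + b)/2) ((c + a)/2)
      + triangleIntegral f ((a + b)/2) b ((b + c)/2)
      + triangleIntegral f ((c + a)/2) ((b + c)/2) c
      + triangleIntegral f ((a + b)/2) ((b + c)/2) ((c + a)/2) := by
  unfold triangleIntegral
  rw [seg_split h1, seg_split h2, seg_split h3]
  rw [show (c + a)/2 = (a + c)/2 by ring] at *
  rw [seg_rev f ((a+c)/2) ((a+b)/2), seg_rev f ((b+c)/2) ((a+b)/2),
    seg_rev f ((a+c)/2) ((b+c)/2)]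
  ring

lemma half_dist {x y u v : ℂ} (h : x - y = (u - v)/2) : dist x y = dist u v / 2 := by
  rw [dist_eq_norm, dist_eq_norm, h]
  simp [norm_div]

theorem tri_zero_aux (f : ℂ → ℂ) (U : Set ℂ) (hU : IsOpen U)
    (hf : ContinuousOn f U) (X : Set ℂ) (hXU : X ⊆ U)
    (hXcomp : IsCompact X) (hXcount : X.Countable)
    (w : ℂ) (z₁ z₂ z₃ : ℂ) (htri : convexHull ℝ {z₁, z₂, z₃} ⊆ U)
    (hd : ∀ z ∈ U \ X, DifferentiableAt ℂ f z) :
    triangleIntegral f z₁ z₂ z₃ = 0 := by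
  -- Step 1: `f` is differentiable everywhere on `U` (removable singularities).
  have hdiffU : ∀ z ∈ U, DifferentiableAt ℂ f z := by
    intro z hz
    obtain ⟨R, hR, hsub⟩ : ∃ R > 0, Metric.closedBall z R ⊆ U :=
      (Metric.nhds_basis_closedBall.mem_iff).mp (hU.mem_nhds hz)
    lift R to NNReal using hR.le
    have hp := Complex.hasFPowerSeriesOnBall_of_differentiable_off_countable
      (c := z) (R := R) hXcount (hf.mono hsub)
      (fun y hy => hd y ⟨hsub (Metric.ball_subset_closedBall hy.1), hy.2⟩)
      (by exact_mod_cast hR)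
    exact hp.analyticAt.differentiableAt
  set K := convexHull ℝ ({z₁, z₂, z₃} : Set ℂ) with hK
  have hKconv : Convex ℝ K := convex_convexHull ℝ _
  have hKcomp : IsCompact K := (Set.toFinite ({z₁, z₂, z₃} : Set ℂ)).isCompact_convexHull ℝ
  obtain ⟨ε, hε, hthick⟩ := hKcomp.exists_cthickening_subset_open hU htri
  -- midpoints stay in K
  have hmid : ∀ a b : ℂ, a ∈ K → b ∈ K → (a + b)/2 ∈ K := by
    intro a b ha hb
    have := hKconv ha hb (by norm_num : (0:ℝ) ≤ 1/2) (by norm_num : (0:ℝ) ≤ 1/2) (by norm_num)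
    convert this using 1
    simp [Complex.real_smul]
    push_cast
    ring
  -- continuity on segments within K
  have hseg : ∀ a b : ℂ, a ∈ K → b ∈ K → ContinuousOn f (segment ℝ a b) := by
    intro a b ha hb
    exact hf.mono (fun x hx => htri (hKconv.segment_subset ha hb hx))
  -- Base case: small triangles vanish
  have base : ∀ a b c : ℂ, a ∈ K → b ∈ K → c ∈ K →
      dist a b < ε → dist b c < ε → dist a c < ε → triangleIntegral f a b c = 0 := by
    intro a b c ha hb hc hab hbc hac
    have hball : Metric.closedBall a ε ⊆ U :=
      (Metric.closedBall_subset_cthickening ha ε).trans hthick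
    lift ε to NNReal using hε.le with ε'
    have hdOn : DifferentiableOn ℂ f (Metric.closedBall a (ε' : ℝ)) :=
      fun x hx => (hdiffU x (hball hx)).differentiableWithinAt
    have hp := hdOn.hasFPowerSeriesOnBall (by exact_mod_cast hε)
    obtain ⟨F, hF⟩ := exists_primitive_on_ball hp
    have hhull : convexHull ℝ ({a, b, c} : Set ℂ) ⊆ Metric.ball a (ε' : ℝ) := by
      apply convexHull_min _ (convex_ball _ _)
      intro x hx
      simp only [Set.mem_insert_iff, Set.mem_singleton_iff] at hx
      rcases hx with rfl | rfl | rfl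
      · exact Metric.mem_ball_self hε
      · rw [Metric.mem_ball, dist_comm]; exact hab
      · rw [Metric.mem_ball, dist_comm]; exact hac
    have hsub : ∀ x y : ℂ, x ∈ ({a, b, c} : Set ℂ) → y ∈ ({a, b, c} : Set ℂ) →
        segment ℝ x y ⊆ Metric.ball a (ε' : ℝ) :=
      fun x y hx hy => (segment_subset_convexHull hx hy).trans hhull
    have hcseg : ∀ x y : ℂ, segment ℝ x y ⊆ Metric.ball a (ε' : ℝ) →
        ContinuousOn f (segment ℝ x y) :=
      fun x y h => hf.mono (h.trans ((Metric.ball_subset_closedBall).trans hball))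
    have e1 := seg_ftc (hcseg a b (hsub a b (by simp) (by simp)))
      (fun z hz => hF z (hsub a b (by simp) (by simp) hz))
    have e2 := seg_ftc (hcseg b c (hsub b c (by simp) (by simp)))
      (fun z hz => hF z (hsub b c (by simp) (by simp) hz))
    have e3 := seg_ftc (hcseg c a (hsub c a (by simp) (by simp)))
      (fun z hz => hF z (hsub c a (by simp) (by simp) hz))
    unfold triangleIntegral
    rw [e1, e2, e3]
    ring
  -- Induction on subdivision depth
  have ind : ∀ n : ℕ, ∀ a b c : ℂ, a ∈ K → b ∈ K → c ∈ K →
      dist a b < ε * 2 ^ n → dist b c < ε * 2 ^ n → dist a c < ε * 2 ^ n →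
      triangleIntegral f a b c = 0 := by
    intro n
    induction n with
    | zero => simpa using base
    | succ n ih =>
      intro a b c ha hb hc hab hbc hac
      have ha' : (b + c)/2 ∈ K := hmid b c hb hc
      have hb' : (c + a)/2 ∈ K := hmid c a hc ha
      have hc' : (a + b)/2 ∈ K := hmid a b ha hb
      have h2 : (0:ℝ) < 2 ^ n := by positivity
      have hpow : ε * 2 ^ (n + 1) = ε * 2 ^ n * 2 := by ring
      rw [hpow] at hab hbc hac
      rw [tri_subdiv (hseg a b ha hb) (hseg b c hb hc) (hseg c a hc ha)]
      rw [ih a ((a+b)/2) ((c+a)/2) ha hc' hb'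
          (by rw [half_dist (u := a) (v := b) (by ring)]; linarith)
          (by rw [half_dist (u := b) (v := c) (by ring)]; linarith)
          (by rw [half_dist (u := a) (v := c) (by ring)]; linarith),
        ih ((a+b)/2) b ((b+c)/2) hc' hb ha'
          (by rw [half_dist (u := a) (v := b) (by ring)]; linarith)
          (by rw [half_dist (u := b) (v := c) (by ring)]; linarith)
          (by rw [half_dist (u := a) (v := c) (by ring)]; linarith),
        ih ((c+a)/2) ((b+c)/2) c hb' ha' hc
          (by rw [half_dist (u := a) (v := b) (by ring)]; linarith)
          (by rw [half_dist (u := b) (v := c) (by ring)]; linarith)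
          (by rw [half_dist (u := a) (v := c) (by ring)]; linarith),
        ih ((a+b)/2) ((b+c)/2) ((c+a)/2) hc' ha' hb'
          (by rw [half_dist (u := a) (v := c) (by ring)]; linarith)
          (by rw [half_dist (u := b) (v := a) (by ring), dist_comm b a]; linarith)
          (by rw [half_dist (u := b) (v := c) (by ring)]; linarith)]
      ring
  -- Conclude
  set M : ℝ := dist z₁ z₂ + dist z₂ z₃ + dist z₁ z₃ with hM
  obtain ⟨n, hn⟩ : ∃ n : ℕ, M / ε < 2 ^ n := pow_unbounded_of_one_lt _ (by norm_num)
  have hMlt : M < ε * 2 ^ n := by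
    rw [div_lt_iff₀ hε] at hn
    linarith [hn]
  have d1 : dist z₁ z₂ < ε * 2 ^ n := by
    have := dist_nonneg (x := z₂) (y := z₃); have := dist_nonneg (x := z₁) (y := z₃)
    rw [hM] at hMlt; linarith
  have d2 : dist z₂ z₃ < ε * 2 ^ n := by
    have := dist_nonneg (x := z₁) (y := z₂); have := dist_nonneg (x := z₁) (y := z₃)
    rw [hM] at hMlt; linarith
  have d3 : dist z₁ z₃ < ε * 2 ^ n := by
    have := dist_nonneg (x := z₁) (y := z₂); have := dist_nonneg (x := z₂) (y := z₃)
    rw [hM] at hMlt; linarith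
  exact ind n z₁ z₂ z₃ (subset_convexHull ℝ _ (by simp)) (subset_convexHull ℝ _ (by simp))
    (subset_convexHull ℝ _ (by simp)) d1 d2 d3

end

theorem stmt_7 (f : ℂ → ℂ) (U : Set ℂ) (hU : IsOpen U)
    (hf : ContinuousOn f U) (X : Set ℂ) (hXU : X ⊆ U)
    (hXcomp : IsCompact X) (hXcount : X.Countable)
    (w : ℂ) (hacc : {p | IsAccumulationPoint p X} = {w}) (hwX : w ∈ X)
    (z₁ z₂ z₃ : ℂ) (htri : convexHull ℝ {z₁, z₂, z₃} ⊆ U)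
    (hd : ∀ z ∈ U \ X, DifferentiableAt ℂ f z)
    (hint : w ∈ interior (convexHull ℝ {z₁, z₂, z₃})) :
    triangleIntegral f z₁ z₂ z₃ = 0 := by
  exact tri_zero_aux f U hU hf X hXU hXcomp hXcount w z₁ z₂ z₃ htri hd
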